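/- Let P and Q be two joint pmfs for (X,Y,U) on common finite alphabets such that the conditional distributions Q_{XY|U=u} are defined for every u with P_U(u) > 0. Let P_m = min over (x,y,u) with P(x,y,u) > 0 of P(x,y|u), and δ = max over u with P_U(u) > 0 of ‖P_{XY|U=u} − Q_{XY|U=u}‖_TV. Then ρ_{m,Q}(X;Y|U) ≥ (ρ_{m,P}(X;Y|U) − 4δ/P_m) / (1 + 4δ/P_m), where ρ_{m,P} and ρ_{m,Q} denote the conditional maximal correlation computed under P and Q respectively. -/

import Mathlib

open scoped BigOperators Classical

noncomputable section

namespace GCI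

/-- A bundled finite alphabet. -/
structure FinAlph : Type 1 where
  carrier : Type
  [fin : Fintype carrier]

instance : CoeSort FinAlph Type := ⟨FinAlph.carrier⟩
instance (A : FinAlph) : Fintype A := A.fin

variable {Ω : Type} [Fintype Ω]

/-- `p` is a probability mass function on the finite sample space `Ω`. -/
def IsPMF (p : Ω → ℝ) : Prop := (∀ ω, 0 ≤ p ω) ∧ ∑ ω, p ω = 1

/-- Expectation of a real random variable `f` under the pmf `p`. -/
def expec (p : Ω → ℝ) (f : Ω → ℝ) : ℝ := ∑ ω, p ω * f ω

/-- Marginal pmf of the random variable `X` under `p`. -/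
def marg {𝒳 : Type} (p : Ω → ℝ) (X : Ω → 𝒳) (x : 𝒳) : ℝ :=
  ∑ ω, if X ω = x then p ω else 0

/-- Conditional expectation `E[f | U = u]`. -/
def cexp {𝒰 : Type} (p : Ω → ℝ) (U : Ω → 𝒰) (u : 𝒰) (f : Ω → ℝ) : ℝ :=
  (∑ ω, if U ω = u then p ω * f ω else 0) / marg p U u

/-- `E[cov(f, g | U)]`. -/
def ccov {𝒰 : Type} (p : Ω → ℝ) (U : Ω → 𝒰) (f g : Ω → ℝ) : ℝ :=
  expec p fun ω => (f ω - cexp p U (U ω) f) * (g ω - cexp p U (U ω) g)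

/-- `E[var(f | U)]`. -/
def cvar {𝒰 : Type} (p : Ω → ℝ) (U : Ω → 𝒰) (f : Ω → ℝ) : ℝ := ccov p U f f

/-- Conditional Pearson correlation `ρ(f; g | U)`. -/
def ccorr {𝒰 : Type} (p : Ω → ℝ) (U : Ω → 𝒰) (f g : Ω → ℝ) : ℝ :=
  if 0 < cvar p U f * cvar p U g then
    ccov p U f g / (Real.sqrt (cvar p U f) * Real.sqrt (cvar p U g))
  else 0

/-- Conditional correlation ratio `θ(X; Y | U)` for a real-valued `X`. -/
def cratio {𝒴 𝒰 : Type} (p : Ω → ℝ) (U : Ω → 𝒰) (X : Ω → ℝ) (Y : Ω → 𝒴) : ℝ :=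
  ⨆ g : 𝒴 × 𝒰 → ℝ, ccorr p U X fun ω => g (Y ω, U ω)

/-- Conditional maximal correlation `ρ_m(X; Y | U)`. -/
def maxCorr {𝒳 𝒴 𝒰 : Type} (p : Ω → ℝ) (U : Ω → 𝒰) (X : Ω → 𝒳) (Y : Ω → 𝒴) : ℝ :=
  ⨆ f : 𝒳 × 𝒰 → ℝ, ⨆ g : 𝒴 × 𝒰 → ℝ,
    ccorr p U (fun ω => f (X ω, U ω)) fun ω => g (Y ω, U ω)

/-- Unconditional Pearson correlation. -/
def corr0 (p : Ω → ℝ) (f g : Ω → ℝ) : ℝ := ccorr p (fun _ => ()) f g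

/-- Unconditional correlation ratio `θ(X;Y)`. -/
def ratio0 {𝒴 : Type} (p : Ω → ℝ) (X : Ω → ℝ) (Y : Ω → 𝒴) : ℝ :=
  cratio p (fun _ => ()) X Y

/-- Unconditional maximal correlation `ρ_m(X;Y)`. -/
def maxCorr0 {𝒳 𝒴 : Type} (p : Ω → ℝ) (X : Ω → 𝒳) (Y : Ω → 𝒴) : ℝ :=
  maxCorr p (fun _ => ()) X Y

/-- Shannon entropy (base 2) of the random variable `X` under `p`. -/
def ent {𝒳 : Type} [Fintype 𝒳] (p : Ω → ℝ) (X : Ω → 𝒳) : ℝ :=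
  ∑ x, -(marg p X x * Real.logb 2 (marg p X x))

/-- Conditional Shannon entropy `H(X | U)`. -/
def condEnt {𝒳 𝒰 : Type} [Fintype 𝒳] [Fintype 𝒰] (p : Ω → ℝ) (X : Ω → 𝒳) (U : Ω → 𝒰) : ℝ :=
  ent p (fun ω => (X ω, U ω)) - ent p U

/-- Mutual information `I(X; U)`. -/
def mutInfo {𝒳 𝒰 : Type} [Fintype 𝒳] [Fintype 𝒰] (p : Ω → ℝ) (X : Ω → 𝒳) (U : Ω → 𝒰) : ℝ :=
  ent p X + ent p U - ent p fun ω => (X ω, U ω)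

/-- Almost-sure equality of two discrete random variables. -/
def AEEq {𝒱 : Type} (p : Ω → ℝ) (f g : Ω → 𝒱) : Prop := ∀ ω, 0 < p ω → f ω = g ω

/-- The Gács–Körner common information `C_GK(X;Y)`. -/
def CGK {𝒳 𝒴 : Type} (p : Ω → ℝ) (X : Ω → 𝒳) (Y : Ω → 𝒴) : ℝ :=
  sSup { r | ∃ (𝒱 : FinAlph) (f : 𝒳 → 𝒱) (g : 𝒴 → 𝒱),
    AEEq p (fun ω => f (X ω)) (fun ω => g (Y ω)) ∧ r = ent p fun ω => f (X ω) }

/-- The conditional Gács–Körner common information `C_GK(X;Y|U)`. -/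
def CGKcond {𝒳 𝒴 𝒰 : Type} [Fintype 𝒰] (p : Ω → ℝ) (X : Ω → 𝒳) (Y : Ω → 𝒴)
    (U : Ω → 𝒰) : ℝ :=
  sSup { r | ∃ (𝒱 : FinAlph) (f : 𝒳 × 𝒰 → 𝒱) (g : 𝒴 × 𝒰 → 𝒱),
    AEEq p (fun ω => f (X ω, U ω)) (fun ω => g (Y ω, U ω)) ∧
    r = condEnt p (fun ω => f (X ω, U ω)) U }

/-- The `β`-approximate common information (approximate information-correlation function). -/
def Cbeta {𝒳 𝒴 : Type} [Fintype 𝒳] [Fintype 𝒴] (p : 𝒳 × 𝒴 → ℝ) (β : ℝ) : ℝ :=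
  sInf { r | ∃ (𝒰 : FinAlph) (q : (𝒳 × 𝒴) × 𝒰 → ℝ),
    IsPMF q ∧ (∀ a, marg q Prod.fst a = p a) ∧
    maxCorr q Prod.snd (fun a => a.1.1) (fun a => a.1.2) ≤ β ∧
    r = mutInfo q Prod.fst Prod.snd }

/-- The `n`-th term in the definition of the `β`-exact common information:
the normalized smallest entropy of an auxiliary variable for `n` i.i.d. copies. -/
def KbetaN {𝒳 𝒴 : Type} [Fintype 𝒳] [Fintype 𝒴] (p : 𝒳 × 𝒴 → ℝ) (β : ℝ) (n : ℕ) : ℝ :=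
  sInf { r | ∃ (𝒰 : FinAlph) (q : ((Fin n → 𝒳) × (Fin n → 𝒴)) × 𝒰 → ℝ),
    IsPMF q ∧
    (∀ a : (Fin n → 𝒳) × (Fin n → 𝒴), marg q Prod.fst a = ∏ i, p (a.1 i, a.2 i)) ∧
    maxCorr q Prod.snd (fun a => a.1.1) (fun a => a.1.2) ≤ β ∧
    r = (1 / (n : ℝ)) * ent q Prod.snd }

/-- The `β`-exact common information (exact information-correlation function). -/
def Kbeta {𝒳 𝒴 : Type} [Fintype 𝒳] [Fintype 𝒴] (p : 𝒳 × 𝒴 → ℝ) (β : ℝ) : ℝ :=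
  Filter.limUnder Filter.atTop fun n => KbetaN p β n



section Aux
set_option linter.unusedSectionVars false

variable {Ω : Type} [Fintype Ω] {𝒳 𝒴 𝒰 : Type} [Fintype 𝒳] [Fintype 𝒴] [Fintype 𝒰]

/-- restricted weight -/
def wgt (p : Ω → ℝ) (U : Ω → 𝒰) (u : 𝒰) : Ω → ℝ := fun ω => if U ω = u then p ω else 0

lemma wgt_nonneg {p : Ω → ℝ} (hp : ∀ ω, 0 ≤ p ω) (U : Ω → 𝒰) (u : 𝒰) (ω : Ω) :
    0 ≤ wgt p U u ω := by unfold wgt; split_ifs; exacts [hp ω, le_refl 0]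

lemma sum_wgt (p : Ω → ℝ) (U : Ω → 𝒰) (u : 𝒰) : ∑ ω, wgt p U u ω = marg p U u := rfl

lemma marg_nonneg {p : Ω → ℝ} (hp : ∀ ω, 0 ≤ p ω) (X : Ω → 𝒳) (x : 𝒳) :
    0 ≤ marg p X x :=
  Finset.sum_nonneg fun ω _ => wgt_nonneg hp X x ω

lemma wgt_eq_zero {p : Ω → ℝ} (hp : ∀ ω, 0 ≤ p ω) {U : Ω → 𝒰} {u : 𝒰}
    (hu : marg p U u = 0) (ω : Ω) : wgt p U u ω = 0 :=
  (Finset.sum_eq_zero_iff_of_nonneg (fun ω _ => wgt_nonneg hp U u ω)).1 hu ω (Finset.mem_univ ω)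

lemma cexp_eq (p : Ω → ℝ) (U : Ω → 𝒰) (u : 𝒰) (f : Ω → ℝ) :
    cexp p U u f = (∑ ω, wgt p U u ω * f ω) / marg p U u := by
  unfold cexp wgt
  congr 1
  refine Finset.sum_congr rfl fun ω _ => ?_
  split_ifs <;> simp

lemma cexp_congr {p : Ω → ℝ} {U : Ω → 𝒰} {u : 𝒰} {f g : Ω → ℝ}
    (h : ∀ ω, p ω ≠ 0 → U ω = u → f ω = g ω) : cexp p U u f = cexp p U u g := by
  rw [cexp_eq, cexp_eq]
  congr 1
  refine Finset.sum_congr rfl fun ω _ => ?_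
  unfold wgt
  split_ifs with hc
  · rcases eq_or_ne (p ω) 0 with h0 | h0
    · simp [h0]
    · rw [h ω h0 hc]
  · simp

lemma cexp_smul (p : Ω → ℝ) (U : Ω → 𝒰) (u : 𝒰) (c : ℝ) (f : Ω → ℝ) :
    cexp p U u (fun ω => c * f ω) = c * cexp p U u f := by
  rw [cexp_eq, cexp_eq]
  have : ∑ ω, wgt p U u ω * (c * f ω) = c * ∑ ω, wgt p U u ω * f ω := by
    rw [Finset.mul_sum]; exact Finset.sum_congr rfl fun ω _ => by ring
  rw [this, mul_div_assoc]

/-- sum of weighted values equals cexp times marginal -/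
lemma sum_wgt_mul {p : Ω → ℝ} (hp : ∀ ω, 0 ≤ p ω) (U : Ω → 𝒰) (u : 𝒰) (f : Ω → ℝ) :
    ∑ ω, wgt p U u ω * f ω = cexp p U u f * marg p U u := by
  rcases eq_or_ne (marg p U u) 0 with h0 | h0
  · rw [h0, mul_zero]
    exact Finset.sum_eq_zero fun ω _ => by rw [wgt_eq_zero hp h0, zero_mul]
  · rw [cexp_eq, div_mul_cancel₀ _ h0]

/-- key per-u centered second moment decomposition -/
lemma sum_wgt_center {p : Ω → ℝ} (hp : ∀ ω, 0 ≤ p ω) (U : Ω → 𝒰) (u : 𝒰) (f g : Ω → ℝ) :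
    ∑ ω, wgt p U u ω * ((f ω - cexp p U u f) * (g ω - cexp p U u g))
      = marg p U u * (cexp p U u (fun ω => f ω * g ω) - cexp p U u f * cexp p U u g) := by
  have expand : ∀ ω, wgt p U u ω * ((f ω - cexp p U u f) * (g ω - cexp p U u g))
      = wgt p U u ω * (f ω * g ω) - cexp p U u f * (wgt p U u ω * g ω)
        - cexp p U u g * (wgt p U u ω * f ω)
        + cexp p U u f * cexp p U u g * wgt p U u ω := fun ω => by ring
  rw [Finset.sum_congr rfl fun ω _ => expand ω]
  rw [Finset.sum_add_distrib, Finset.sum_sub_distrib, Finset.sum_sub_distrib,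
    ← Finset.mul_sum, ← Finset.mul_sum, ← Finset.mul_sum,
    sum_wgt_mul hp, sum_wgt_mul hp, sum_wgt_mul hp, sum_wgt]
  rcases eq_or_ne (marg p U u) 0 with h0 | h0
  · rw [h0]; ring
  · ring

lemma expec_split (p : Ω → ℝ) (U : Ω → 𝒰) (h : Ω → ℝ) :
    expec p h = ∑ u, ∑ ω, wgt p U u ω * h ω := by
  unfold expec
  rw [Finset.sum_comm]
  refine Finset.sum_congr rfl fun ω _ => ?_
  unfold wgt
  have : ∀ u, (if U ω = u then p ω else 0) * h ω = if U ω = u then p ω * h ω else 0 := by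
    intro u; split_ifs <;> simp
  rw [Finset.sum_congr rfl fun u _ => this u, Finset.sum_ite_eq Finset.univ (U ω) (fun _ => p ω * h ω)]
  simp

/-- ccov as a sum over u of marginal times conditional covariance -/
lemma ccov_eq {p : Ω → ℝ} (hp : ∀ ω, 0 ≤ p ω) (U : Ω → 𝒰) (f g : Ω → ℝ) :
    ccov p U f g = ∑ u, marg p U u *
      (cexp p U u (fun ω => f ω * g ω) - cexp p U u f * cexp p U u g) := by
  unfold ccov
  rw [expec_split p U]
  refine Finset.sum_congr rfl fun u _ => ?_
  rw [← sum_wgt_center hp U u f g]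
  refine Finset.sum_congr rfl fun ω _ => ?_
  unfold wgt
  split_ifs with hc
  · rw [hc]
  · simp

lemma cvar_nonneg {p : Ω → ℝ} (hp : ∀ ω, 0 ≤ p ω) (U : Ω → 𝒰) (f : Ω → ℝ) :
    0 ≤ cvar p U f := by
  unfold cvar ccov expec
  exact Finset.sum_nonneg fun ω _ => mul_nonneg (hp ω) (mul_self_nonneg _)

lemma ccov_sq_le {p : Ω → ℝ} (hp : ∀ ω, 0 ≤ p ω) (U : Ω → 𝒰) (f g : Ω → ℝ) :
    (ccov p U f g) ^ 2 ≤ cvar p U f * cvar p U g := by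
  unfold cvar ccov expec
  set F := fun ω => f ω - cexp p U (U ω) f with hF
  set G := fun ω => g ω - cexp p U (U ω) g with hG
  have h1 : ∀ ω, p ω * (F ω * G ω)
      = (Real.sqrt (p ω) * F ω) * (Real.sqrt (p ω) * G ω) := by
    intro ω
    have : Real.sqrt (p ω) * Real.sqrt (p ω) = p ω := Real.mul_self_sqrt (hp ω)
    linear_combination (F ω * G ω) * this.symm
  have h2 : ∀ ω, p ω * (F ω * F ω) = (Real.sqrt (p ω) * F ω) ^ 2 := by
    intro ω
    have : Real.sqrt (p ω) * Real.sqrt (p ω) = p ω := Real.mul_self_sqrt (hp ω)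
    linear_combination (F ω * F ω) * this.symm
  have h3 : ∀ ω, p ω * (G ω * G ω) = (Real.sqrt (p ω) * G ω) ^ 2 := by
    intro ω
    have : Real.sqrt (p ω) * Real.sqrt (p ω) = p ω := Real.mul_self_sqrt (hp ω)
    linear_combination (G ω * G ω) * this.symm
  rw [Finset.sum_congr rfl fun ω _ => h1 ω, Finset.sum_congr rfl fun ω _ => h2 ω,
    Finset.sum_congr rfl fun ω _ => h3 ω]
  exact Finset.sum_mul_sq_le_sq_mul_sq _ _ _

lemma ccorr_le_one {p : Ω → ℝ} (hp : ∀ ω, 0 ≤ p ω) (U : Ω → 𝒰) (f g : Ω → ℝ) :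
    ccorr p U f g ≤ 1 := by
  unfold ccorr
  split_ifs with h
  · have hf : 0 ≤ cvar p U f := cvar_nonneg hp U f
    have hg : 0 ≤ cvar p U g := cvar_nonneg hp U g
    have hf' : 0 < cvar p U f := by
      rcases hf.lt_or_eq with h' | h'
      · exact h'
      · exfalso; rw [← h'] at h; simp at h
    have hg' : 0 < cvar p U g := by
      rcases hg.lt_or_eq with h' | h'
      · exact h'
      · exfalso; rw [← h'] at h; nlinarith
    have hd : 0 < Real.sqrt (cvar p U f) * Real.sqrt (cvar p U g) :=
      mul_pos (Real.sqrt_pos.2 hf') (Real.sqrt_pos.2 hg')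
    rw [div_le_one hd]
    have hcs : (ccov p U f g) ^ 2 ≤ cvar p U f * cvar p U g := ccov_sq_le hp U f g
    have : ccov p U f g ≤ Real.sqrt (cvar p U f * cvar p U g) := by
      calc ccov p U f g ≤ |ccov p U f g| := le_abs_self _
        _ = Real.sqrt ((ccov p U f g) ^ 2) := (Real.sqrt_sq_eq_abs _).symm
        _ ≤ Real.sqrt (cvar p U f * cvar p U g) := Real.sqrt_le_sqrt hcs
    rwa [Real.sqrt_mul hf] at this
  · norm_num

lemma maxCorr_le_one {p : Ω → ℝ} (hp : ∀ ω, 0 ≤ p ω) (U : Ω → 𝒰) (X : Ω → 𝒳) (Y : Ω → 𝒴) :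
    maxCorr p U X Y ≤ 1 := by
  unfold maxCorr
  refine ciSup_le fun f => ciSup_le fun g => ccorr_le_one hp U _ _

set_option maxHeartbeats 1000000 in
lemma maxCorr_nonneg {p : Ω → ℝ} (hp : ∀ ω, 0 ≤ p ω) (U : Ω → 𝒰) (X : Ω → 𝒳) (Y : Ω → 𝒴) :
    0 ≤ maxCorr p U X Y := by
  unfold maxCorr
  have hb : ∀ f : 𝒳 × 𝒰 → ℝ, BddAbove (Set.range fun g : 𝒴 × 𝒰 → ℝ =>
      ccorr p U (fun ω => f (X ω, U ω)) fun ω => g (Y ω, U ω)) := by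
    intro f
    exact ⟨1, by rintro r ⟨g, rfl⟩; exact ccorr_le_one hp U _ _⟩
  have hB : BddAbove (Set.range fun f : 𝒳 × 𝒰 → ℝ => ⨆ g : 𝒴 × 𝒰 → ℝ,
      ccorr p U (fun ω => f (X ω, U ω)) fun ω => g (Y ω, U ω)) := by
    refine ⟨1, ?_⟩
    rintro r ⟨f, rfl⟩
    exact ciSup_le fun g => ccorr_le_one hp U _ _
  have h0 : (⨆ g : 𝒴 × 𝒰 → ℝ, ccorr p U (fun ω => (fun _ : 𝒳 × 𝒰 => (0:ℝ)) (X ω, U ω))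
      fun ω => g (Y ω, U ω)) = 0 := by
    have : ∀ g : 𝒴 × 𝒰 → ℝ, ccorr p U (fun ω => (0:ℝ)) (fun ω => g (Y ω, U ω)) = 0 := by
      intro g
      unfold ccorr
      have hz : cvar p U (fun _ : Ω => (0:ℝ)) = 0 := by
        unfold cvar ccov expec
        refine Finset.sum_eq_zero fun ω _ => ?_
        have : cexp p U (U ω) (fun _ : Ω => (0:ℝ)) = 0 := by
          rw [cexp_eq]
          simp
        simp only [this]; ring
      rw [hz]
      simp
    simp only [this]
    exact ciSup_const
  have hle := le_ciSup hB (fun _ : 𝒳 × 𝒰 => (0:ℝ))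
  rw [h0] at hle
  exact hle

lemma tv_bound {A : Type} [Fintype A] (P Q h : A → ℝ) (δ M : ℝ) (hM : 0 ≤ M)
    (hδ : 0 ≤ δ) (hTV : ∑ a, |P a - Q a| ≤ 2*δ) (hh : ∀ a, |h a| ≤ M) :
    |(∑ a, Q a * h a) - ∑ a, P a * h a| ≤ 2*δ*M := by
  rw [← Finset.sum_sub_distrib]
  calc |∑ a, (Q a * h a - P a * h a)| ≤ ∑ a, |Q a * h a - P a * h a| :=
        Finset.abs_sum_le_sum_abs _ _
    _ = ∑ a, |Q a - P a| * |h a| := by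
        refine Finset.sum_congr rfl fun a _ => ?_
        rw [← abs_mul]; ring_nf
    _ ≤ ∑ a, |P a - Q a| * M := by
        refine Finset.sum_le_sum fun a _ => ?_
        rw [abs_sub_comm]
        exact mul_le_mul_of_nonneg_left (hh a) (abs_nonneg _)
    _ = (∑ a, |P a - Q a|) * M := by rw [Finset.sum_mul]
    _ ≤ 2*δ*M := mul_le_mul_of_nonneg_right hTV hM

lemma core {A : Type} [Fintype A] (P Q F G : A → ℝ) (Pm δ V W : ℝ)
    (hP0 : ∀ a, 0 ≤ P a)
    (hTV : ∑ a, |P a - Q a| ≤ 2*δ) (hδ : 0 ≤ δ)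
    (hPm : 0 < Pm) (hPm1 : Pm ≤ 1)
    (hV : V = ∑ a, P a * F a ^ 2) (hW : W = ∑ a, P a * G a ^ 2)
    (hF0 : ∑ a, P a * F a = 0) (hG0 : ∑ a, P a * G a = 0)
    (hFb : ∀ a, F a ^ 2 ≤ V / Pm) (hGb : ∀ a, G a ^ 2 ≤ W / Pm) :
    ((∑ a, P a * (F a * G a)) - (2*δ/Pm + (2*δ/Pm)^2) * (Real.sqrt V * Real.sqrt W)
        ≤ (∑ a, Q a * (F a * G a)) - (∑ a, Q a * F a) * (∑ a, Q a * G a))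
    ∧ ((∑ a, Q a * F a ^ 2) - (∑ a, Q a * F a)^2 ≤ (1 + 2*δ/Pm) * V)
    ∧ ((1 - 2*δ/Pm - (2*δ/Pm)^2) * V ≤ (∑ a, Q a * F a ^ 2) - (∑ a, Q a * F a)^2) := by
  have hV0 : 0 ≤ V := hV ▸ Finset.sum_nonneg fun a _ => mul_nonneg (hP0 a) (sq_nonneg _)
  have hW0 : 0 ≤ W := hW ▸ Finset.sum_nonneg fun a _ => mul_nonneg (hP0 a) (sq_nonneg _)
  set ε := 2*δ/Pm with hε
  have hε0 : 0 ≤ ε := by positivity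
  have hsV : Real.sqrt V ^ 2 = V := Real.sq_sqrt hV0
  have hsW : Real.sqrt W ^ 2 = W := Real.sq_sqrt hW0
  have hsPm : Real.sqrt Pm ^ 2 = Pm := Real.sq_sqrt hPm.le
  have hsPm0 : 0 < Real.sqrt Pm := Real.sqrt_pos.2 hPm
  have hPmle : Pm ≤ Real.sqrt Pm := by nlinarith [hsPm, hsPm0]
  -- pointwise bounds
  have bF : ∀ a, |F a| ≤ Real.sqrt V / Real.sqrt Pm := by
    intro a
    rw [← Real.sqrt_sq_eq_abs, ← Real.sqrt_div hV0]
    exact Real.sqrt_le_sqrt (hFb a)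
  have bG : ∀ a, |G a| ≤ Real.sqrt W / Real.sqrt Pm := by
    intro a
    rw [← Real.sqrt_sq_eq_abs, ← Real.sqrt_div hW0]
    exact Real.sqrt_le_sqrt (hGb a)
  have bFG : ∀ a, |F a * G a| ≤ Real.sqrt V * Real.sqrt W / Pm := by
    intro a
    rw [abs_mul]
    calc |F a| * |G a| ≤ (Real.sqrt V / Real.sqrt Pm) * (Real.sqrt W / Real.sqrt Pm) :=
          mul_le_mul (bF a) (bG a) (abs_nonneg _) (by positivity)
      _ = Real.sqrt V * Real.sqrt W / Pm := by
          rw [div_mul_div_comm, Real.mul_self_sqrt hPm.le]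
  have bF2 : ∀ a, |F a ^ 2| ≤ V / Pm := fun a => by
    rw [abs_of_nonneg (sq_nonneg _)]; exact hFb a
  -- TV estimates
  have e1 := tv_bound P Q (fun a => F a * G a) δ (Real.sqrt V * Real.sqrt W / Pm)
    (by positivity) hδ hTV bFG
  have e2 := tv_bound P Q F δ (Real.sqrt V / Real.sqrt Pm) (by positivity) hδ hTV bF
  have e3 := tv_bound P Q G δ (Real.sqrt W / Real.sqrt Pm) (by positivity) hδ hTV bG
  have e4 := tv_bound P Q (fun a => F a ^ 2) δ (V / Pm) (by positivity) hδ hTV bF2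
  rw [hF0] at e2
  rw [hG0] at e3
  simp only [sub_zero] at e2 e3
  have hVeq : ∑ a, P a * F a ^ 2 = V := hV.symm
  rw [hVeq] at e4
  -- translate e1..e4 into two-sided bounds
  have e1' := abs_le.1 e1
  have e2' := abs_le.1 e2
  have e3' := abs_le.1 e3
  have e4' := abs_le.1 e4
  have h2δ : 2*δ*(Real.sqrt V * Real.sqrt W / Pm) = ε * (Real.sqrt V * Real.sqrt W) := by
    rw [hε]; ring
  have hinv : (1:ℝ)/Real.sqrt Pm ≤ 1/Pm := one_div_le_one_div_of_le hPm hPmle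
  have h2δF : 2*δ*(Real.sqrt V / Real.sqrt Pm) ≤ ε * Real.sqrt V := by
    calc 2*δ*(Real.sqrt V / Real.sqrt Pm) = (2*δ*Real.sqrt V) * (1/Real.sqrt Pm) := by ring
      _ ≤ (2*δ*Real.sqrt V) * (1/Pm) := by
          refine mul_le_mul_of_nonneg_left hinv (by positivity)
      _ = ε * Real.sqrt V := by rw [hε]; ring
  have h2δG : 2*δ*(Real.sqrt W / Real.sqrt Pm) ≤ ε * Real.sqrt W := by
    calc 2*δ*(Real.sqrt W / Real.sqrt Pm) = (2*δ*Real.sqrt W) * (1/Real.sqrt Pm) := by ring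
      _ ≤ (2*δ*Real.sqrt W) * (1/Pm) := by
          refine mul_le_mul_of_nonneg_left hinv (by positivity)
      _ = ε * Real.sqrt W := by rw [hε]; ring
  have h2δV : 2*δ*(V/Pm) = ε * V := by rw [hε]; ring
  rw [h2δ] at e1'
  rw [h2δV] at e4'
  have e2'' : |∑ a, Q a * F a| ≤ ε * Real.sqrt V := e2.trans h2δF
  have e3'' : |∑ a, Q a * G a| ≤ ε * Real.sqrt W := e3.trans h2δG
  have e2l := abs_le.1 e2''
  have e3l := abs_le.1 e3''
  have sV0 : 0 ≤ Real.sqrt V := Real.sqrt_nonneg V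
  have sW0 : 0 ≤ Real.sqrt W := Real.sqrt_nonneg W
  refine ⟨?_, ?_, ?_⟩
  · -- covariance lower bound
    have hprod : (∑ a, Q a * F a) * (∑ a, Q a * G a) ≤ ε^2 * (Real.sqrt V * Real.sqrt W) := by
      calc (∑ a, Q a * F a) * (∑ a, Q a * G a) ≤ |(∑ a, Q a * F a) * (∑ a, Q a * G a)| :=
            le_abs_self _
        _ = |∑ a, Q a * F a| * |∑ a, Q a * G a| := abs_mul _ _
        _ ≤ (ε * Real.sqrt V) * (ε * Real.sqrt W) :=
            mul_le_mul e2'' e3'' (abs_nonneg _) (by positivity)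
        _ = ε^2 * (Real.sqrt V * Real.sqrt W) := by ring
    have expand : (ε + ε^2) * (Real.sqrt V * Real.sqrt W)
        = ε * (Real.sqrt V * Real.sqrt W) + ε^2 * (Real.sqrt V * Real.sqrt W) := by ring
    linarith [e1'.1, hprod, expand]
  · -- variance upper bound
    have expand2 : (1+ε)*V = V + ε*V := by ring
    linarith [e4'.2, sq_nonneg (∑ a, Q a * F a), expand2]
  · -- variance lower bound
    have hsq : (∑ a, Q a * F a)^2 ≤ ε^2 * V := by
      have h := sq_le_sq' e2l.1 e2l.2
      calc (∑ a, Q a * F a)^2 ≤ (ε * Real.sqrt V)^2 := h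
        _ = ε^2 * V := by rw [mul_pow, hsV]
    have expand3 : (1-ε-ε^2)*V = V - ε*V - ε^2*V := by ring
    linarith [e4'.1, hsq, expand3]

lemma cexp_sub_const {p : Ω → ℝ} (hp : ∀ ω, 0 ≤ p ω) (U : Ω → 𝒰) (u : 𝒰)
    (hu : marg p U u ≠ 0) (h : Ω → ℝ) (c : ℝ) :
    cexp p U u (fun ω => h ω - c) = cexp p U u h - c := by
  rw [cexp_eq, cexp_eq]
  have : ∑ ω, wgt p U u ω * (h ω - c)
      = (∑ ω, wgt p U u ω * h ω) - c * marg p U u := by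
    rw [← sum_wgt p U u, Finset.mul_sum, ← Finset.sum_sub_distrib]
    exact Finset.sum_congr rfl fun ω _ => by ring
  rw [this, sub_div, mul_div_assoc, div_self hu, mul_one]

lemma le_marg {p : Ω → ℝ} (hp : ∀ ω, 0 ≤ p ω) (W : Ω → 𝒳) (ω : Ω) :
    p ω ≤ marg p W (W ω) := by
  unfold marg
  have := Finset.single_le_sum (f := fun ω' => if W ω' = W ω then p ω' else 0)
    (fun ω' _ => by split_ifs; exacts [hp ω', le_refl 0]) (Finset.mem_univ ω)
  simpa using this

lemma sum_marg_triple (p : Ω → ℝ) (X : Ω → 𝒳) (Y : Ω → 𝒴) (U : Ω → 𝒰) (u : 𝒰)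
    (h : 𝒳 → 𝒴 → ℝ) :
    ∑ a : 𝒳 × 𝒴, marg p (fun ω => (X ω, Y ω, U ω)) (a.1, a.2, u) * h a.1 a.2
      = ∑ ω, wgt p U u ω * h (X ω) (Y ω) := by
  unfold marg wgt
  refine Eq.trans (Finset.sum_congr rfl fun a _ => Finset.sum_mul _ _ _)
    (Eq.trans Finset.sum_comm (Finset.sum_congr rfl fun ω _ => ?_))
  rw [Finset.sum_eq_single ((X ω, Y ω) : 𝒳 × 𝒴)]
  · by_cases hu : U ω = u
    · simp [hu]
    · simp [Prod.ext_iff, hu]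
  · intro b _ hb
    rw [if_neg, zero_mul]
    intro hc
    simp only [Prod.mk.injEq] at hc
    exact hb (by rw [Prod.ext_iff]; exact ⟨hc.1.symm, hc.2.1.symm⟩)
  · intro hb; exact absurd (Finset.mem_univ _) hb

lemma sum_marg_pair (p : Ω → ℝ) (X : Ω → 𝒳) (Y : Ω → 𝒴) (U : Ω → 𝒰) (u : 𝒰) :
    ∑ a : 𝒳 × 𝒴, marg p (fun ω => (X ω, Y ω, U ω)) (a.1, a.2, u) = marg p U u := by
  have := sum_marg_triple p X Y U u (fun _ _ => 1)
  simpa [sum_wgt] using this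

lemma marg_triple_le {p : Ω → ℝ} (hp : ∀ ω, 0 ≤ p ω) (X : Ω → 𝒳) (Y : Ω → 𝒴) (U : Ω → 𝒰)
    (x : 𝒳) (y : 𝒴) (u : 𝒰) :
    marg p (fun ω => (X ω, Y ω, U ω)) (x, y, u) ≤ marg p U u := by
  rw [← sum_marg_pair p X Y U u]
  exact Finset.single_le_sum
    (f := fun a : 𝒳 × 𝒴 => marg p (fun ω => (X ω, Y ω, U ω)) (a.1, a.2, u))
    (fun a _ => marg_nonneg hp _ _) (Finset.mem_univ (x, y))

lemma cov_shift {p : Ω → ℝ} (hp0 : ∀ ω, 0 ≤ p ω) (U : Ω → 𝒰) (u : 𝒰)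
    (hm : marg p U u ≠ 0) (φ ψ : Ω → ℝ) (c d : ℝ) :
    cexp p U u (fun ω => (φ ω - c) * (ψ ω - d))
      - cexp p U u (fun ω => φ ω - c) * cexp p U u (fun ω => ψ ω - d)
    = cexp p U u (fun ω => φ ω * ψ ω) - cexp p U u φ * cexp p U u ψ := by
  rw [cexp_sub_const hp0 U u hm φ c, cexp_sub_const hp0 U u hm ψ d]
  have h1 := sum_wgt_center hp0 U u (fun ω => φ ω - c) (fun ω => ψ ω - d)
  rw [cexp_sub_const hp0 U u hm φ c, cexp_sub_const hp0 U u hm ψ d] at h1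
  have h2 := sum_wgt_center hp0 U u φ ψ
  have h3 : ∑ ω, wgt p U u ω * ((φ ω - c - (cexp p U u φ - c)) * (ψ ω - d - (cexp p U u ψ - d)))
      = ∑ ω, wgt p U u ω * ((φ ω - cexp p U u φ) * (ψ ω - cexp p U u ψ)) :=
    Finset.sum_congr rfl fun ω _ => by ring
  rw [h3, h2] at h1
  exact (mul_left_cancel₀ hm h1).symm

lemma cond_decomp {p : Ω → ℝ} (hp0 : ∀ ω, 0 ≤ p ω) (X : Ω → 𝒳) (Y : Ω → 𝒴) (U : Ω → 𝒰)
    (u : 𝒰) (φ ψ : Ω → ℝ) (F G : 𝒳 × 𝒴 → ℝ)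
    (hφ : ∀ ω, p ω ≠ 0 → U ω = u → φ ω = F (X ω, Y ω))
    (hψ : ∀ ω, p ω ≠ 0 → U ω = u → ψ ω = G (X ω, Y ω)) :
    marg p U u * (cexp p U u (fun ω => φ ω * ψ ω) - cexp p U u φ * cexp p U u ψ)
    = marg p U u *
      ((∑ a : 𝒳 × 𝒴, (marg p (fun ω => (X ω, Y ω, U ω)) (a.1, a.2, u) / marg p U u) * (F a * G a))
        - (∑ a : 𝒳 × 𝒴, (marg p (fun ω => (X ω, Y ω, U ω)) (a.1, a.2, u) / marg p U u) * F a)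
          * (∑ a : 𝒳 × 𝒴, (marg p (fun ω => (X ω, Y ω, U ω)) (a.1, a.2, u) / marg p U u) * G a)) := by
  rcases eq_or_ne (marg p U u) 0 with hm | hm
  · rw [hm, zero_mul, zero_mul]
  have key : ∀ (F' : 𝒳 × 𝒴 → ℝ) (φ' : Ω → ℝ),
      (∀ ω, p ω ≠ 0 → U ω = u → φ' ω = F' (X ω, Y ω)) →
      ∑ a : 𝒳 × 𝒴, (marg p (fun ω => (X ω, Y ω, U ω)) (a.1, a.2, u) / marg p U u) * F' a
        = cexp p U u φ' := by
    intro F' φ' hae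
    rw [cexp_eq]
    have s1 : ∑ a : 𝒳 × 𝒴, (marg p (fun ω => (X ω, Y ω, U ω)) (a.1, a.2, u) / marg p U u) * F' a
        = (∑ a : 𝒳 × 𝒴, marg p (fun ω => (X ω, Y ω, U ω)) (a.1, a.2, u) * F' (a.1, a.2))
          / marg p U u := by
      rw [Finset.sum_div]
      exact Finset.sum_congr rfl fun a _ => by rw [div_mul_eq_mul_div]
    rw [s1, sum_marg_triple p X Y U u (fun x y => F' (x, y))]
    congr 1
    refine Finset.sum_congr rfl fun ω _ => ?_
    unfold wgt
    split_ifs with hc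
    · rcases eq_or_ne (p ω) 0 with h0 | h0
      · rw [h0, zero_mul, zero_mul]
      · rw [hae ω h0 hc]
    · rw [zero_mul, zero_mul]
  have hprod : ∀ ω, p ω ≠ 0 → U ω = u →
      (fun ω => φ ω * ψ ω) ω = (fun a : 𝒳 × 𝒴 => F a * G a) (X ω, Y ω) := by
    intro ω h0 hc
    simp only
    rw [hφ ω h0 hc, hψ ω h0 hc]
  rw [key (fun a => F a * G a) (fun ω => φ ω * ψ ω) hprod, key F φ hφ, key G ψ hψ]

lemma cond_bridge {p : Ω → ℝ} (hp0 : ∀ ω, 0 ≤ p ω) (X : Ω → 𝒳) (Y : Ω → 𝒴) (U : Ω → 𝒰)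
    (u : 𝒰) (F' : 𝒳 × 𝒴 → ℝ) (φ' : Ω → ℝ)
    (hae : ∀ ω, p ω ≠ 0 → U ω = u → φ' ω = F' (X ω, Y ω)) :
    ∑ a : 𝒳 × 𝒴, (marg p (fun ω => (X ω, Y ω, U ω)) (a.1, a.2, u) / marg p U u) * F' a
      = cexp p U u φ' := by
  rw [cexp_eq]
  have s1 : ∑ a : 𝒳 × 𝒴, (marg p (fun ω => (X ω, Y ω, U ω)) (a.1, a.2, u) / marg p U u) * F' a
      = (∑ a : 𝒳 × 𝒴, marg p (fun ω => (X ω, Y ω, U ω)) (a.1, a.2, u) * F' (a.1, a.2))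
        / marg p U u := by
    rw [Finset.sum_div]
    exact Finset.sum_congr rfl fun a _ => by rw [div_mul_eq_mul_div]
  rw [s1, sum_marg_triple p X Y U u (fun x y => F' (x, y))]
  congr 1
  refine Finset.sum_congr rfl fun ω _ => ?_
  unfold wgt
  split_ifs with hc
  · rcases eq_or_ne (p ω) 0 with h0 | h0
    · rw [h0, zero_mul, zero_mul]
    · rw [hae ω h0 hc]
  · rw [zero_mul, zero_mul]

end Aux

/-- Total variation distance between two pmfs on a finite alphabet:
`‖p − q‖_TV = (1/2)·Σ_a |p a − q a|`. -/
def tvDist {α : Type} [Fintype α] (p q : α → ℝ) : ℝ := (1 / 2) * ∑ a, |p a - q a|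

/-- TV bound on conditional maximal correlation. If `Q_{XY|U=u}` is
defined for every `u` with `P_U(u) > 0`, `P_m` is the minimum conditional probability
`P(x,y|u)` over the support of `P`, and `δ` is the maximal total variation distance between
the conditional distributions of `(X,Y)` given `U = u` under `P` and `Q`, then
`ρ_{m,Q}(X;Y|U) ≥ (ρ_{m,P}(X;Y|U) − 4δ/P_m)/(1 + 4δ/P_m)`. -/
theorem maxCorr_tv_bound {Ω 𝒳 𝒴 𝒰 : Type} [Fintype Ω] [Fintype 𝒳] [Fintype 𝒴] [Fintype 𝒰]
    (p q : Ω → ℝ) (hp : IsPMF p) (hq : IsPMF q)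
    (X : Ω → 𝒳) (Y : Ω → 𝒴) (U : Ω → 𝒰)
    (hdef : ∀ u, 0 < marg p U u → 0 < marg q U u)
    (Pm δ : ℝ)
    (hPm : Pm = sInf { r | ∃ x y u, 0 < marg p (fun ω => (X ω, Y ω, U ω)) (x, y, u) ∧
      r = marg p (fun ω => (X ω, Y ω, U ω)) (x, y, u) / marg p U u })
    (hδ : δ = sSup { r | ∃ u, 0 < marg p U u ∧
      r = tvDist
        (fun a : 𝒳 × 𝒴 => marg p (fun ω => (X ω, Y ω, U ω)) (a.1, a.2, u) / marg p U u)
        (fun a : 𝒳 × 𝒴 => marg q (fun ω => (X ω, Y ω, U ω)) (a.1, a.2, u) / marg q U u) }) :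
    (maxCorr p U X Y - 4 * δ / Pm) / (1 + 4 * δ / Pm) ≤ maxCorr q U X Y := by

  classical
  obtain ⟨hp0, hp1⟩ := hp
  obtain ⟨hq0, hq1⟩ := hq
  set Z : Ω → 𝒳 × 𝒴 × 𝒰 := fun ω => (X ω, Y ω, U ω) with hZ
  -- a positive point
  have hex : ∃ ω, 0 < p ω := by
    by_contra hc
    push_neg at hc
    have h0 : ∑ ω, p ω = 0 := Finset.sum_eq_zero fun ω _ => le_antisymm (hc ω) (hp0 ω)
    rw [hp1] at h0; norm_num at h0
  obtain ⟨ω₀, hω₀⟩ := hex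
  have hZω₀ : 0 < marg p Z (X ω₀, Y ω₀, U ω₀) := lt_of_lt_of_le hω₀ (le_marg hp0 Z ω₀)
  have hU₀ : 0 < marg p U (U ω₀) := lt_of_lt_of_le hω₀ (le_marg hp0 U ω₀)
  -- the sum-over-pairs identity
  have hpairP : ∀ u, ∑ a : 𝒳 × 𝒴, marg p Z (a.1, a.2, u) = marg p U u := by
    intro u; have := sum_marg_pair p X Y U u; rw [← hZ] at this; exact this
  have htripleP : ∀ x y u, marg p Z (x, y, u) ≤ marg p U u := by
    intro x y u; have := marg_triple_le hp0 X Y U x y u; rw [← hZ] at this; exact this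
  -- Pm facts
  have hSPfin : { r | ∃ x y u, 0 < marg p Z (x, y, u) ∧
      r = marg p Z (x, y, u) / marg p U u }.Finite := by
    refine Set.Finite.subset (Set.finite_range
      (fun v : 𝒳 × 𝒴 × 𝒰 => marg p Z v / marg p U v.2.2)) ?_
    rintro r ⟨x, y, u, hpos, rfl⟩
    exact ⟨(x, y, u), rfl⟩
  have hSPne : Set.Nonempty { r | ∃ x y u, 0 < marg p Z (x, y, u) ∧
      r = marg p Z (x, y, u) / marg p U u } :=
    ⟨_, ⟨X ω₀, Y ω₀, U ω₀, hZω₀, rfl⟩⟩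
  have hSPlb : ∀ r ∈ { r | ∃ x y u, 0 < marg p Z (x, y, u) ∧
      r = marg p Z (x, y, u) / marg p U u }, 0 < r ∧ r ≤ 1 := by
    rintro r ⟨x, y, u, hpos, rfl⟩
    have hUu : 0 < marg p U u := lt_of_lt_of_le hpos (htripleP x y u)
    exact ⟨div_pos hpos hUu, (div_le_one hUu).2 (htripleP x y u)⟩
  have hPm_mem := hPm ▸ hSPne.csInf_mem hSPfin
  have hPm_pos : 0 < Pm := (hSPlb _ hPm_mem).1
  have hPm_le1 : Pm ≤ 1 := (hSPlb _ hPm_mem).2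
  have hPm_le : ∀ x y u, 0 < marg p Z (x, y, u) →
      Pm ≤ marg p Z (x, y, u) / marg p U u := by
    intro x y u hpos
    rw [hPm]
    exact csInf_le ⟨0, fun r hr => (hSPlb r hr).1.le⟩ ⟨x, y, u, hpos, rfl⟩
  -- δ facts
  have hSδfin : { r | ∃ u, 0 < marg p U u ∧
      r = tvDist (fun a : 𝒳 × 𝒴 => marg p Z (a.1, a.2, u) / marg p U u)
        (fun a : 𝒳 × 𝒴 => marg q Z (a.1, a.2, u) / marg q U u) }.Finite := by
    refine Set.Finite.subset (Set.finite_range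
      (fun u : 𝒰 => tvDist (fun a : 𝒳 × 𝒴 => marg p Z (a.1, a.2, u) / marg p U u)
        (fun a : 𝒳 × 𝒴 => marg q Z (a.1, a.2, u) / marg q U u))) ?_
    rintro r ⟨u, hpos, rfl⟩
    exact ⟨u, rfl⟩
  have hδ_ge : ∀ u, 0 < marg p U u →
      ∑ a : 𝒳 × 𝒴, |marg p Z (a.1, a.2, u) / marg p U u
        - marg q Z (a.1, a.2, u) / marg q U u| ≤ 2 * δ := by
    intro u hu
    have hmem : tvDist (fun a : 𝒳 × 𝒴 => marg p Z (a.1, a.2, u) / marg p U u)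
        (fun a : 𝒳 × 𝒴 => marg q Z (a.1, a.2, u) / marg q U u) ∈
        { r | ∃ u, 0 < marg p U u ∧
          r = tvDist (fun a : 𝒳 × 𝒴 => marg p Z (a.1, a.2, u) / marg p U u)
            (fun a : 𝒳 × 𝒴 => marg q Z (a.1, a.2, u) / marg q U u) } := ⟨u, hu, rfl⟩
    have hle := le_csSup hSδfin.bddAbove hmem
    rw [← hδ] at hle
    unfold tvDist at hle
    simp only at hle
    linarith
  have hδ0 : 0 ≤ δ := by
    have hmem : tvDist (fun a : 𝒳 × 𝒴 => marg p Z (a.1, a.2, U ω₀) / marg p U (U ω₀))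
        (fun a : 𝒳 × 𝒴 => marg q Z (a.1, a.2, U ω₀) / marg q U (U ω₀)) ∈
        { r | ∃ u, 0 < marg p U u ∧
          r = tvDist (fun a : 𝒳 × 𝒴 => marg p Z (a.1, a.2, u) / marg p U u)
            (fun a : 𝒳 × 𝒴 => marg q Z (a.1, a.2, u) / marg q U u) } := ⟨U ω₀, hU₀, rfl⟩
    have hle := le_csSup hSδfin.bddAbove hmem
    rw [← hδ] at hle
    have h2 : 0 ≤ tvDist (fun a : 𝒳 × 𝒴 => marg p Z (a.1, a.2, U ω₀) / marg p U (U ω₀))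
        (fun a : 𝒳 × 𝒴 => marg q Z (a.1, a.2, U ω₀) / marg q U (U ω₀)) := by
      unfold tvDist
      have : 0 ≤ ∑ a : 𝒳 × 𝒴, |marg p Z (a.1, a.2, U ω₀) / marg p U (U ω₀)
          - marg q Z (a.1, a.2, U ω₀) / marg q U (U ω₀)| :=
        Finset.sum_nonneg fun a _ => abs_nonneg _
      linarith
    linarith
  -- the main dichotomy
  set t := 4 * δ / Pm with ht
  have ht0 : 0 ≤ t := by positivity
  have h1t : 0 < 1 + t := by linarith
  have hMq0 : 0 ≤ maxCorr q U X Y := maxCorr_nonneg hq0 U X Y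
  rcases le_or_gt 1 t with hbig | hsmall
  · have hMp1 : maxCorr p U X Y ≤ 1 := maxCorr_le_one hp0 U X Y
    have hle0 : (maxCorr p U X Y - t) / (1 + t) ≤ 0 :=
      div_nonpos_of_nonpos_of_nonneg (by linarith) h1t.le
    linarith
  rw [div_le_iff₀ h1t]
  have hsuff : maxCorr p U X Y ≤ t + maxCorr q U X Y * (1 + t) → 
      maxCorr p U X Y - t ≤ maxCorr q U X Y * (1 + t) := fun h => by linarith
  refine hsuff ?_
  have hunf : maxCorr p U X Y = ⨆ f : 𝒳 × 𝒰 → ℝ, ⨆ g : 𝒴 × 𝒰 → ℝ,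
      ccorr p U (fun ω => f (X ω, U ω)) fun ω => g (Y ω, U ω) := rfl
  rw [hunf]
  refine ciSup_le fun f => ciSup_le fun g => ?_
  set fX : Ω → ℝ := fun ω => f (X ω, U ω) with hfX
  set gY : Ω → ℝ := fun ω => g (Y ω, U ω) with hgY
  set r := ccorr p U fX gY with hr
  rcases le_or_gt r t with hrt | hrt
  · have : 0 ≤ maxCorr q U X Y * (1 + t) := mul_nonneg hMq0 h1t.le
    linarith
  -- main case : r > t ≥ 0
  set ε := 2 * δ / Pm with hεdef
  have hε0 : 0 ≤ ε := by positivity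
  have htε : t = 2 * ε := by rw [ht, hεdef]; ring
  have hε12 : ε < 1 / 2 := by rw [htε] at hsmall; linarith
  have hguard : 0 < cvar p U fX * cvar p U gY := by
    by_contra hc
    have : r = 0 := by rw [hr]; unfold ccorr; rw [if_neg hc]
    linarith
  have hVp : 0 < cvar p U fX := by
    rcases (cvar_nonneg hp0 U fX).lt_or_eq with h' | h'
    · exact h'
    · exfalso; rw [← h'] at hguard; simp at hguard
  have hWp : 0 < cvar p U gY := by
    rcases (cvar_nonneg hp0 U gY).lt_or_eq with h' | h'
    · exact h'
    · exfalso; rw [← h'] at hguard; nlinarith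
  have hrfact : ccov p U fX gY = r * (Real.sqrt (cvar p U fX) * Real.sqrt (cvar p U gY)) := by
    rw [hr]; unfold ccorr; rw [if_pos hguard]
    field_simp

  -- per-u constructions
  set mF : 𝒰 → ℝ := fun u => cexp p U u fX with hmF
  set mG : 𝒰 → ℝ := fun u => cexp p U u gY with hmG
  set Fc : 𝒳 → 𝒰 → ℝ := fun x u =>
    if 0 < ∑ y, marg p Z (x, y, u) then f (x, u) - mF u else 0 with hFc
  set Gc : 𝒴 → 𝒰 → ℝ := fun y u =>
    if 0 < ∑ x, marg p Z (x, y, u) then g (y, u) - mG u else 0 with hGc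
  set sc : 𝒰 → ℝ := fun u => Real.sqrt (marg p U u / marg q U u) with hsc
  set f' : 𝒳 × 𝒰 → ℝ := fun xu => sc xu.2 * Fc xu.1 xu.2 with hf'
  set g' : 𝒴 × 𝒰 → ℝ := fun yu => sc yu.2 * Gc yu.1 yu.2 with hg'
  set fX' : Ω → ℝ := fun ω => f' (X ω, U ω) with hfX'
  set gY' : Ω → ℝ := fun ω => g' (Y ω, U ω) with hgY'
  set PU : 𝒰 → 𝒳 × 𝒴 → ℝ := fun u a => marg p Z (a.1, a.2, u) / marg p U u with hPU
  set QU : 𝒰 → 𝒳 × 𝒴 → ℝ := fun u a => marg q Z (a.1, a.2, u) / marg q U u with hQU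
  set FF : 𝒰 → 𝒳 × 𝒴 → ℝ := fun u a => Fc a.1 u with hFF
  set GG : 𝒰 → 𝒳 × 𝒴 → ℝ := fun u a => Gc a.2 u with hGG
  set Vu : 𝒰 → ℝ := fun u => ∑ a : 𝒳 × 𝒴, PU u a * FF u a ^ 2 with hVu
  set Wu : 𝒰 → ℝ := fun u => ∑ a : 𝒳 × 𝒴, PU u a * GG u a ^ 2 with hWu
  set Cu : 𝒰 → ℝ := fun u => ∑ a : 𝒳 × 𝒴, PU u a * (FF u a * GG u a) with hCu
  set VQ : 𝒰 → ℝ := fun u =>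
    (∑ a : 𝒳 × 𝒴, QU u a * FF u a ^ 2) - (∑ a : 𝒳 × 𝒴, QU u a * FF u a) ^ 2 with hVQ
  set WQ : 𝒰 → ℝ := fun u =>
    (∑ a : 𝒳 × 𝒴, QU u a * GG u a ^ 2) - (∑ a : 𝒳 × 𝒴, QU u a * GG u a) ^ 2 with hWQ
  set CQ : 𝒰 → ℝ := fun u =>
    (∑ a : 𝒳 × 𝒴, QU u a * (FF u a * GG u a))
      - (∑ a : 𝒳 × 𝒴, QU u a * FF u a) * (∑ a : 𝒳 × 𝒴, QU u a * GG u a) with hCQ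
  have hPU0 : ∀ u a, 0 ≤ PU u a := fun u a =>
    div_nonneg (marg_nonneg hp0 Z _) (marg_nonneg hp0 U u)
  have hQU0 : ∀ u a, 0 ≤ QU u a := fun u a =>
    div_nonneg (marg_nonneg hq0 Z _) (marg_nonneg hq0 U u)
  have hVu0 : ∀ u, 0 ≤ Vu u := fun u =>
    Finset.sum_nonneg fun a _ => mul_nonneg (hPU0 u a) (sq_nonneg _)
  have hWu0 : ∀ u, 0 ≤ Wu u := fun u =>
    Finset.sum_nonneg fun a _ => mul_nonneg (hPU0 u a) (sq_nonneg _)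
  -- masks
  have maskX : ∀ ω, p ω ≠ 0 → ∀ u, U ω = u → 0 < ∑ y, marg p Z (X ω, y, u) := by
    intro ω h0 u hu
    have h1 : 0 < marg p Z (X ω, Y ω, u) := by
      rw [← hu]
      exact lt_of_lt_of_le ((hp0 ω).lt_of_ne (Ne.symm h0)) (le_marg hp0 Z ω)
    exact lt_of_lt_of_le h1 (Finset.single_le_sum
      (f := fun y => marg p Z (X ω, y, u))
      (fun y _ => marg_nonneg hp0 Z _) (Finset.mem_univ (Y ω)))
  have maskY : ∀ ω, p ω ≠ 0 → ∀ u, U ω = u → 0 < ∑ x, marg p Z (x, Y ω, u) := by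
    intro ω h0 u hu
    have h1 : 0 < marg p Z (X ω, Y ω, u) := by
      rw [← hu]
      exact lt_of_lt_of_le ((hp0 ω).lt_of_ne (Ne.symm h0)) (le_marg hp0 Z ω)
    exact lt_of_lt_of_le h1 (Finset.single_le_sum
      (f := fun x => marg p Z (x, Y ω, u))
      (fun x _ => marg_nonneg hp0 Z _) (Finset.mem_univ (X ω)))
  -- a.e. identification of the centered masked functions
  have haeF : ∀ u ω, p ω ≠ 0 → U ω = u → fX ω - mF u = FF u (X ω, Y ω) := by
    intro u ω h0 hu
    simp only [hFF, hFc]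
    rw [if_pos (maskX ω h0 u hu), hfX, ← hu]
  have haeG : ∀ u ω, p ω ≠ 0 → U ω = u → gY ω - mG u = GG u (X ω, Y ω) := by
    intro u ω h0 hu
    simp only [hGG, hGc]
    rw [if_pos (maskY ω h0 u hu), hgY, ← hu]
  -- p-side means vanish
  have hmeanF : ∀ u, marg p U u ≠ 0 → ∑ a : 𝒳 × 𝒴, PU u a * FF u a = 0 := by
    intro u hm
    have hb := cond_bridge hp0 X Y U u (FF u) (fun ω => fX ω - mF u) (haeF u)
    rw [← hZ] at hb
    simp only [hPU]
    rw [hb, cexp_sub_const hp0 U u hm fX (mF u), hmF]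
    ring
  have hmeanG : ∀ u, marg p U u ≠ 0 → ∑ a : 𝒳 × 𝒴, QU u a * GG u a = 0 → True := fun _ _ _ => trivial
  have hmeanG' : ∀ u, marg p U u ≠ 0 → ∑ a : 𝒳 × 𝒴, PU u a * GG u a = 0 := by
    intro u hm
    have hb := cond_bridge hp0 X Y U u (GG u) (fun ω => gY ω - mG u) (haeG u)
    rw [← hZ] at hb
    simp only [hPU]
    rw [hb, cexp_sub_const hp0 U u hm gY (mG u), hmG]
    ring
  -- p-side decomposition of ccov and cvar
  have hcovp : ccov p U fX gY = ∑ u, marg p U u * Cu u := by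
    rw [ccov_eq hp0 U fX gY]
    refine Finset.sum_congr rfl fun u _ => ?_
    rcases eq_or_ne (marg p U u) 0 with hm | hm
    · rw [hm, zero_mul, zero_mul]
    rw [← cov_shift hp0 U u hm fX gY (mF u) (mG u)]
    have hdec := cond_decomp hp0 X Y U u (fun ω => fX ω - mF u) (fun ω => gY ω - mG u)
      (FF u) (GG u) (haeF u) (haeG u)
    rw [← hZ] at hdec
    rw [hdec]
    have h1 := hmeanF u hm
    have h2 := hmeanG' u hm
    simp only [hPU] at h1 h2
    rw [h1, h2, hCu]
    simp only [hPU]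
    ring
  have hvarpF : cvar p U fX = ∑ u, marg p U u * Vu u := by
    have hcv : cvar p U fX = ccov p U fX fX := rfl
    rw [hcv, ccov_eq hp0 U fX fX]
    refine Finset.sum_congr rfl fun u _ => ?_
    rcases eq_or_ne (marg p U u) 0 with hm | hm
    · rw [hm, zero_mul, zero_mul]
    rw [← cov_shift hp0 U u hm fX fX (mF u) (mF u)]
    have hdec := cond_decomp hp0 X Y U u (fun ω => fX ω - mF u) (fun ω => fX ω - mF u)
      (FF u) (FF u) (haeF u) (haeF u)
    rw [← hZ] at hdec
    rw [hdec]
    have h1 := hmeanF u hm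
    simp only [hPU] at h1
    rw [h1, hVu]
    simp only [hPU]
    rw [mul_zero, sub_zero]
    congr 1
    exact Finset.sum_congr rfl fun a _ => by rw [sq]
  have hvarpG : cvar p U gY = ∑ u, marg p U u * Wu u := by
    have hcv : cvar p U gY = ccov p U gY gY := rfl
    rw [hcv, ccov_eq hp0 U gY gY]
    refine Finset.sum_congr rfl fun u _ => ?_
    rcases eq_or_ne (marg p U u) 0 with hm | hm
    · rw [hm, zero_mul, zero_mul]
    rw [← cov_shift hp0 U u hm gY gY (mG u) (mG u)]
    have hdec := cond_decomp hp0 X Y U u (fun ω => gY ω - mG u) (fun ω => gY ω - mG u)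
      (GG u) (GG u) (haeG u) (haeG u)
    rw [← hZ] at hdec
    rw [hdec]
    have h1 := hmeanG' u hm
    simp only [hPU] at h1
    rw [h1, hWu]
    simp only [hPU]
    rw [mul_zero, sub_zero]
    congr 1
    exact Finset.sum_congr rfl fun a _ => by rw [sq]

  -- q-side a.e. identities
  have haeF' : ∀ u ω, q ω ≠ 0 → U ω = u → fX' ω = sc u * FF u (X ω, Y ω) := by
    intro u ω h0 hu
    simp only [hfX', hf', hFF]
    rw [← hu]
  have haeG' : ∀ u ω, q ω ≠ 0 → U ω = u → gY' ω = sc u * GG u (X ω, Y ω) := by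
    intro u ω h0 hu
    simp only [hgY', hg', hGG]
    rw [← hu]
  -- q-side decomposition
  have hcovq : ccov q U fX' gY' = ∑ u, marg p U u * CQ u := by
    rw [ccov_eq hq0 U fX' gY']
    refine Finset.sum_congr rfl fun u _ => ?_
    rcases eq_or_ne (marg p U u) 0 with hm | hm
    · -- scale is zero: everything vanishes
      have hsc0 : sc u = 0 := by
        simp only [hsc]
        rw [hm, zero_div, Real.sqrt_zero]
      have hzF : cexp q U u fX' = 0 := by
        have : cexp q U u fX' = cexp q U u (fun _ => 0) :=
          cexp_congr fun ω h0 hu => by rw [haeF' u ω h0 hu, hsc0, zero_mul]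
        rw [this, cexp_eq]
        simp
      have hzP : cexp q U u (fun ω => fX' ω * gY' ω) = 0 := by
        have : cexp q U u (fun ω => fX' ω * gY' ω) = cexp q U u (fun _ => 0) :=
          cexp_congr fun ω h0 hu => by rw [haeF' u ω h0 hu, hsc0, zero_mul, zero_mul]
        rw [this, cexp_eq]
        simp
      rw [hzF, hzP, hm]
      ring
    have hqm : marg q U u ≠ 0 :=
      (hdef u ((marg_nonneg hp0 U u).lt_of_ne (Ne.symm hm))).ne'
    have hsc2 : sc u ^ 2 = marg p U u / marg q U u := by
      simp only [hsc]
      exact Real.sq_sqrt (div_nonneg (marg_nonneg hp0 U u) (marg_nonneg hq0 U u))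
    have hdec := cond_decomp hq0 X Y U u fX' gY'
      (fun a => sc u * FF u a) (fun a => sc u * GG u a)
      (fun ω h0 hu => haeF' u ω h0 hu) (fun ω h0 hu => haeG' u ω h0 hu)
    rw [← hZ] at hdec
    rw [hdec]
    have hA : ∑ a : 𝒳 × 𝒴, (marg q Z (a.1, a.2, u) / marg q U u)
        * ((fun a => sc u * FF u a) a * (fun a => sc u * GG u a) a)
        = sc u ^ 2 * ∑ a : 𝒳 × 𝒴, QU u a * (FF u a * GG u a) := by
      rw [Finset.mul_sum]
      refine Finset.sum_congr rfl fun a _ => ?_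
      simp only [hQU]
      ring
    have hB : ∑ a : 𝒳 × 𝒴, (marg q Z (a.1, a.2, u) / marg q U u)
        * ((fun a => sc u * FF u a) a)
        = sc u * ∑ a : 𝒳 × 𝒴, QU u a * FF u a := by
      rw [Finset.mul_sum]
      refine Finset.sum_congr rfl fun a _ => ?_
      simp only [hQU]
      ring
    have hC : ∑ a : 𝒳 × 𝒴, (marg q Z (a.1, a.2, u) / marg q U u)
        * ((fun a => sc u * GG u a) a)
        = sc u * ∑ a : 𝒳 × 𝒴, QU u a * GG u a := by
      rw [Finset.mul_sum]
      refine Finset.sum_congr rfl fun a _ => ?_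
      simp only [hQU]
      ring
    rw [hA, hB, hC, hCQ]
    have hfin : marg q U u * sc u ^ 2 = marg p U u := by
      rw [hsc2]
      field_simp
    calc marg q U u * (sc u ^ 2 * (∑ a : 𝒳 × 𝒴, QU u a * (FF u a * GG u a))
          - (sc u * ∑ a : 𝒳 × 𝒴, QU u a * FF u a) * (sc u * ∑ a : 𝒳 × 𝒴, QU u a * GG u a))
        = (marg q U u * sc u ^ 2) * ((∑ a : 𝒳 × 𝒴, QU u a * (FF u a * GG u a))
          - (∑ a : 𝒳 × 𝒴, QU u a * FF u a) * (∑ a : 𝒳 × 𝒴, QU u a * GG u a)) := by ring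
      _ = _ := by rw [hfin]

  have hvarqF : cvar q U fX' = ∑ u, marg p U u * VQ u := by
    have hcv : cvar q U fX' = ccov q U fX' fX' := rfl
    rw [hcv, ccov_eq hq0 U fX' fX']
    refine Finset.sum_congr rfl fun u _ => ?_
    rcases eq_or_ne (marg p U u) 0 with hm | hm
    · have hsc0 : sc u = 0 := by
        simp only [hsc]
        rw [hm, zero_div, Real.sqrt_zero]
      have hzF : cexp q U u fX' = 0 := by
        have : cexp q U u fX' = cexp q U u (fun _ => 0) :=
          cexp_congr fun ω h0 hu => by rw [haeF' u ω h0 hu, hsc0, zero_mul]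
        rw [this, cexp_eq]
        simp
      have hzP : cexp q U u (fun ω => fX' ω * fX' ω) = 0 := by
        have : cexp q U u (fun ω => fX' ω * fX' ω) = cexp q U u (fun _ => 0) :=
          cexp_congr fun ω h0 hu => by rw [haeF' u ω h0 hu, hsc0, zero_mul, zero_mul]
        rw [this, cexp_eq]
        simp
      rw [hzF, hzP, hm]
      ring
    have hqm : marg q U u ≠ 0 :=
      (hdef u ((marg_nonneg hp0 U u).lt_of_ne (Ne.symm hm))).ne'
    have hsc2 : sc u ^ 2 = marg p U u / marg q U u := by
      simp only [hsc]
      exact Real.sq_sqrt (div_nonneg (marg_nonneg hp0 U u) (marg_nonneg hq0 U u))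
    have hdec := cond_decomp hq0 X Y U u fX' fX'
      (fun a => sc u * FF u a) (fun a => sc u * FF u a)
      (fun ω h0 hu => haeF' u ω h0 hu) (fun ω h0 hu => haeF' u ω h0 hu)
    rw [← hZ] at hdec
    rw [hdec]
    have hA : ∑ a : 𝒳 × 𝒴, (marg q Z (a.1, a.2, u) / marg q U u)
        * ((fun a => sc u * FF u a) a * (fun a => sc u * FF u a) a)
        = sc u ^ 2 * ∑ a : 𝒳 × 𝒴, QU u a * FF u a ^ 2 := by
      rw [Finset.mul_sum]
      refine Finset.sum_congr rfl fun a _ => ?_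
      simp only [hQU]
      ring
    have hB : ∑ a : 𝒳 × 𝒴, (marg q Z (a.1, a.2, u) / marg q U u)
        * ((fun a => sc u * FF u a) a)
        = sc u * ∑ a : 𝒳 × 𝒴, QU u a * FF u a := by
      rw [Finset.mul_sum]
      refine Finset.sum_congr rfl fun a _ => ?_
      simp only [hQU]
      ring
    rw [hA, hB, hVQ]
    have hfin : marg q U u * sc u ^ 2 = marg p U u := by
      rw [hsc2]
      field_simp
    calc marg q U u * (sc u ^ 2 * (∑ a : 𝒳 × 𝒴, QU u a * FF u a ^ 2)
          - (sc u * ∑ a : 𝒳 × 𝒴, QU u a * FF u a) * (sc u * ∑ a : 𝒳 × 𝒴, QU u a * FF u a))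
        = (marg q U u * sc u ^ 2) * ((∑ a : 𝒳 × 𝒴, QU u a * FF u a ^ 2)
          - (∑ a : 𝒳 × 𝒴, QU u a * FF u a) ^ 2) := by ring
      _ = _ := by rw [hfin]
  have hvarqG : cvar q U gY' = ∑ u, marg p U u * WQ u := by
    have hcv : cvar q U gY' = ccov q U gY' gY' := rfl
    rw [hcv, ccov_eq hq0 U gY' gY']
    refine Finset.sum_congr rfl fun u _ => ?_
    rcases eq_or_ne (marg p U u) 0 with hm | hm
    · have hsc0 : sc u = 0 := by
        simp only [hsc]
        rw [hm, zero_div, Real.sqrt_zero]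
      have hzF : cexp q U u gY' = 0 := by
        have : cexp q U u gY' = cexp q U u (fun _ => 0) :=
          cexp_congr fun ω h0 hu => by rw [haeG' u ω h0 hu, hsc0, zero_mul]
        rw [this, cexp_eq]
        simp
      have hzP : cexp q U u (fun ω => gY' ω * gY' ω) = 0 := by
        have : cexp q U u (fun ω => gY' ω * gY' ω) = cexp q U u (fun _ => 0) :=
          cexp_congr fun ω h0 hu => by rw [haeG' u ω h0 hu, hsc0, zero_mul, zero_mul]
        rw [this, cexp_eq]
        simp
      rw [hzF, hzP, hm]
      ring
    have hqm : marg q U u ≠ 0 :=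
      (hdef u ((marg_nonneg hp0 U u).lt_of_ne (Ne.symm hm))).ne'
    have hsc2 : sc u ^ 2 = marg p U u / marg q U u := by
      simp only [hsc]
      exact Real.sq_sqrt (div_nonneg (marg_nonneg hp0 U u) (marg_nonneg hq0 U u))
    have hdec := cond_decomp hq0 X Y U u gY' gY'
      (fun a => sc u * GG u a) (fun a => sc u * GG u a)
      (fun ω h0 hu => haeG' u ω h0 hu) (fun ω h0 hu => haeG' u ω h0 hu)
    rw [← hZ] at hdec
    rw [hdec]
    have hA : ∑ a : 𝒳 × 𝒴, (marg q Z (a.1, a.2, u) / marg q U u)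
        * ((fun a => sc u * GG u a) a * (fun a => sc u * GG u a) a)
        = sc u ^ 2 * ∑ a : 𝒳 × 𝒴, QU u a * GG u a ^ 2 := by
      rw [Finset.mul_sum]
      refine Finset.sum_congr rfl fun a _ => ?_
      simp only [hQU]
      ring
    have hB : ∑ a : 𝒳 × 𝒴, (marg q Z (a.1, a.2, u) / marg q U u)
        * ((fun a => sc u * GG u a) a)
        = sc u * ∑ a : 𝒳 × 𝒴, QU u a * GG u a := by
      rw [Finset.mul_sum]
      refine Finset.sum_congr rfl fun a _ => ?_
      simp only [hQU]
      ring
    rw [hA, hB, hWQ]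
    have hfin : marg q U u * sc u ^ 2 = marg p U u := by
      rw [hsc2]
      field_simp
    calc marg q U u * (sc u ^ 2 * (∑ a : 𝒳 × 𝒴, QU u a * GG u a ^ 2)
          - (sc u * ∑ a : 𝒳 × 𝒴, QU u a * GG u a) * (sc u * ∑ a : 𝒳 × 𝒴, QU u a * GG u a))
        = (marg q U u * sc u ^ 2) * ((∑ a : 𝒳 × 𝒴, QU u a * GG u a ^ 2)
          - (∑ a : 𝒳 × 𝒴, QU u a * GG u a) ^ 2) := by ring
      _ = _ := by rw [hfin]

  -- pointwise bounds for core
  have hFb : ∀ u, ∀ a : 𝒳 × 𝒴, FF u a ^ 2 ≤ Vu u / Pm := by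
    intro u a
    by_cases hmask : 0 < ∑ y, marg p Z (a.1, y, u)
    · have hy : ∃ y, 0 < marg p Z (a.1, y, u) := by
        by_contra hno
        push_neg at hno
        have hzero : ∑ y, marg p Z (a.1, y, u) = 0 :=
          Finset.sum_eq_zero fun y _ => le_antisymm (hno y) (marg_nonneg hp0 Z _)
        rw [hzero] at hmask
        exact lt_irrefl 0 hmask
      obtain ⟨y₀, hy₀⟩ := hy
      have hsingle : PU u (a.1, y₀) * FF u (a.1, y₀) ^ 2 ≤ Vu u := by
        have hVr : Vu u = ∑ b : 𝒳 × 𝒴, PU u b * FF u b ^ 2 := rfl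
        rw [hVr]
        exact Finset.single_le_sum (f := fun b : 𝒳 × 𝒴 => PU u b * FF u b ^ 2)
          (fun b _ => mul_nonneg (hPU0 u b) (sq_nonneg _)) (Finset.mem_univ (a.1, y₀))
      have hPUy : Pm ≤ PU u (a.1, y₀) := by
        simp only [hPU]
        exact hPm_le a.1 y₀ u hy₀
      have hFF2 : FF u (a.1, y₀) ^ 2 = FF u a ^ 2 := by simp only [hFF]
      rw [le_div_iff₀ hPm_pos]
      calc FF u a ^ 2 * Pm = Pm * FF u (a.1, y₀) ^ 2 := by rw [hFF2]; ring
        _ ≤ PU u (a.1, y₀) * FF u (a.1, y₀) ^ 2 :=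
            mul_le_mul_of_nonneg_right hPUy (sq_nonneg _)
        _ ≤ Vu u := hsingle
    · have hFF0 : FF u a = 0 := by
        simp only [hFF, hFc]
        rw [if_neg hmask]
      rw [hFF0]
      have h1 : (0:ℝ) ^ 2 = 0 := by norm_num
      rw [h1]
      exact div_nonneg (hVu0 u) hPm_pos.le
  have hGb : ∀ u, ∀ a : 𝒳 × 𝒴, GG u a ^ 2 ≤ Wu u / Pm := by
    intro u a
    by_cases hmask : 0 < ∑ x, marg p Z (x, a.2, u)
    · have hy : ∃ x, 0 < marg p Z (x, a.2, u) := by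
        by_contra hno
        push_neg at hno
        have hzero : ∑ x, marg p Z (x, a.2, u) = 0 :=
          Finset.sum_eq_zero fun x _ => le_antisymm (hno x) (marg_nonneg hp0 Z _)
        rw [hzero] at hmask
        exact lt_irrefl 0 hmask
      obtain ⟨x₀, hx₀⟩ := hy
      have hsingle : PU u (x₀, a.2) * GG u (x₀, a.2) ^ 2 ≤ Wu u := by
        have hWr : Wu u = ∑ b : 𝒳 × 𝒴, PU u b * GG u b ^ 2 := rfl
        rw [hWr]
        exact Finset.single_le_sum (f := fun b : 𝒳 × 𝒴 => PU u b * GG u b ^ 2)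
          (fun b _ => mul_nonneg (hPU0 u b) (sq_nonneg _)) (Finset.mem_univ (x₀, a.2))
      have hPUy : Pm ≤ PU u (x₀, a.2) := by
        simp only [hPU]
        exact hPm_le x₀ a.2 u hx₀
      have hGG2 : GG u (x₀, a.2) ^ 2 = GG u a ^ 2 := by simp only [hGG]
      rw [le_div_iff₀ hPm_pos]
      calc GG u a ^ 2 * Pm = Pm * GG u (x₀, a.2) ^ 2 := by rw [hGG2]; ring
        _ ≤ PU u (x₀, a.2) * GG u (x₀, a.2) ^ 2 :=
            mul_le_mul_of_nonneg_right hPUy (sq_nonneg _)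
        _ ≤ Wu u := hsingle
    · have hGG0 : GG u a = 0 := by
        simp only [hGG, hGc]
        rw [if_neg hmask]
      rw [hGG0]
      have h1 : (0:ℝ) ^ 2 = 0 := by norm_num
      rw [h1]
      exact div_nonneg (hWu0 u) hPm_pos.le
  -- core estimates per u
  have hcore : ∀ u, marg p U u ≠ 0 →
      (Cu u - (ε + ε^2) * (Real.sqrt (Vu u) * Real.sqrt (Wu u)) ≤ CQ u)
      ∧ (VQ u ≤ (1 + ε) * Vu u) ∧ ((1 - ε - ε^2) * Vu u ≤ VQ u)
      ∧ (WQ u ≤ (1 + ε) * Wu u) ∧ ((1 - ε - ε^2) * Wu u ≤ WQ u) := by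
    intro u hm
    have hu : 0 < marg p U u := (marg_nonneg hp0 U u).lt_of_ne (Ne.symm hm)
    have hTVu : ∑ a : 𝒳 × 𝒴, |PU u a - QU u a| ≤ 2 * δ := by
      simp only [hPU, hQU]
      exact hδ_ge u hu
    have h1 := core (PU u) (QU u) (FF u) (GG u) Pm δ (Vu u) (Wu u) (hPU0 u) hTVu hδ0
      hPm_pos hPm_le1 rfl rfl (hmeanF u hm) (hmeanG' u hm) (hFb u) (hGb u)
    have h2 := core (PU u) (QU u) (GG u) (FF u) Pm δ (Wu u) (Vu u) (hPU0 u) hTVu hδ0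
      hPm_pos hPm_le1 rfl rfl (hmeanG' u hm) (hmeanF u hm) (hGb u) (hFb u)
    exact ⟨h1.1, h1.2.1, h1.2.2, h2.2.1, h2.2.2⟩

  -- Cauchy–Schwarz over u
  have hpU0 : ∀ u, 0 ≤ marg p U u := fun u => marg_nonneg hp0 U u
  have hCS : ∑ u, marg p U u * (Real.sqrt (Vu u) * Real.sqrt (Wu u))
      ≤ Real.sqrt (cvar p U fX) * Real.sqrt (cvar p U gY) := by
    have hsq := Finset.sum_mul_sq_le_sq_mul_sq Finset.univ
      (fun u => Real.sqrt (marg p U u) * Real.sqrt (Vu u))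
      (fun u => Real.sqrt (marg p U u) * Real.sqrt (Wu u))
    have e1 : ∀ u : 𝒰, (Real.sqrt (marg p U u) * Real.sqrt (Vu u))
        * (Real.sqrt (marg p U u) * Real.sqrt (Wu u))
        = marg p U u * (Real.sqrt (Vu u) * Real.sqrt (Wu u)) := by
      intro u
      have := Real.mul_self_sqrt (hpU0 u)
      linear_combination (Real.sqrt (Vu u) * Real.sqrt (Wu u)) * this
    have e2 : ∀ u : 𝒰, (Real.sqrt (marg p U u) * Real.sqrt (Vu u)) ^ 2
        = marg p U u * Vu u := by
      intro u
      rw [mul_pow, Real.sq_sqrt (hpU0 u), Real.sq_sqrt (hVu0 u)]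
    have e3 : ∀ u : 𝒰, (Real.sqrt (marg p U u) * Real.sqrt (Wu u)) ^ 2
        = marg p U u * Wu u := by
      intro u
      rw [mul_pow, Real.sq_sqrt (hpU0 u), Real.sq_sqrt (hWu0 u)]
    rw [Finset.sum_congr rfl fun u _ => e1 u, Finset.sum_congr rfl fun u _ => e2 u,
      Finset.sum_congr rfl fun u _ => e3 u, ← hvarpF, ← hvarpG] at hsq
    have hnn : 0 ≤ ∑ u, marg p U u * (Real.sqrt (Vu u) * Real.sqrt (Wu u)) :=
      Finset.sum_nonneg fun u _ => mul_nonneg (hpU0 u)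
        (mul_nonneg (Real.sqrt_nonneg _) (Real.sqrt_nonneg _))
    have := (Real.le_sqrt hnn (mul_nonneg (cvar_nonneg hp0 U fX)
      (cvar_nonneg hp0 U gY))).2 hsq
    rwa [Real.sqrt_mul (cvar_nonneg hp0 U fX)] at this
  -- covariance comparison
  have hεε0 : 0 ≤ ε + ε^2 := by positivity
  have hccovq_ge : ccov p U fX gY
      - (ε + ε^2) * (Real.sqrt (cvar p U fX) * Real.sqrt (cvar p U gY))
      ≤ ccov q U fX' gY' := by
    have hstep : ∑ u, (marg p U u * Cu u
        - (ε + ε^2) * (marg p U u * (Real.sqrt (Vu u) * Real.sqrt (Wu u))))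
        ≤ ∑ u, marg p U u * CQ u := by
      refine Finset.sum_le_sum fun u _ => ?_
      rcases eq_or_ne (marg p U u) 0 with hm | hm
      · rw [hm]; ring_nf; rfl
      · have hc := (hcore u hm).1
        have := mul_le_mul_of_nonneg_left hc (hpU0 u)
        calc marg p U u * Cu u
            - (ε + ε^2) * (marg p U u * (Real.sqrt (Vu u) * Real.sqrt (Wu u)))
            = marg p U u * (Cu u - (ε + ε^2) * (Real.sqrt (Vu u) * Real.sqrt (Wu u))) := by
              ring
          _ ≤ marg p U u * CQ u := this
    rw [hcovp, hcovq]
    rw [Finset.sum_sub_distrib] at hstep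
    rw [← Finset.mul_sum] at hstep
    have := mul_le_mul_of_nonneg_left hCS hεε0
    linarith
  -- variance comparisons
  have hvar_ub : ∀ (h1 : cvar q U fX' = ∑ u, marg p U u * VQ u), True := fun _ => trivial
  have hvarqF_ub : cvar q U fX' ≤ (1 + ε) * cvar p U fX := by
    rw [hvarqF, hvarpF, Finset.mul_sum]
    refine Finset.sum_le_sum fun u _ => ?_
    rcases eq_or_ne (marg p U u) 0 with hm | hm
    · rw [hm]; ring_nf; rfl
    · have hc := (hcore u hm).2.1
      calc marg p U u * VQ u ≤ marg p U u * ((1 + ε) * Vu u) :=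
            mul_le_mul_of_nonneg_left hc (hpU0 u)
        _ = (1 + ε) * (marg p U u * Vu u) := by ring
  have hvarqG_ub : cvar q U gY' ≤ (1 + ε) * cvar p U gY := by
    rw [hvarqG, hvarpG, Finset.mul_sum]
    refine Finset.sum_le_sum fun u _ => ?_
    rcases eq_or_ne (marg p U u) 0 with hm | hm
    · rw [hm]; ring_nf; rfl
    · have hc := (hcore u hm).2.2.2.1
      calc marg p U u * WQ u ≤ marg p U u * ((1 + ε) * Wu u) :=
            mul_le_mul_of_nonneg_left hc (hpU0 u)
        _ = (1 + ε) * (marg p U u * Wu u) := by ring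
  have hvarqF_lb : (1 - ε - ε^2) * cvar p U fX ≤ cvar q U fX' := by
    rw [hvarqF, hvarpF, Finset.mul_sum]
    refine Finset.sum_le_sum fun u _ => ?_
    rcases eq_or_ne (marg p U u) 0 with hm | hm
    · rw [hm]; ring_nf; rfl
    · have hc := (hcore u hm).2.2.1
      calc (1 - ε - ε^2) * (marg p U u * Vu u)
          = marg p U u * ((1 - ε - ε^2) * Vu u) := by ring
        _ ≤ marg p U u * VQ u := mul_le_mul_of_nonneg_left hc (hpU0 u)
  have hvarqG_lb : (1 - ε - ε^2) * cvar p U gY ≤ cvar q U gY' := by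
    rw [hvarqG, hvarpG, Finset.mul_sum]
    refine Finset.sum_le_sum fun u _ => ?_
    rcases eq_or_ne (marg p U u) 0 with hm | hm
    · rw [hm]; ring_nf; rfl
    · have hc := (hcore u hm).2.2.2.2
      calc (1 - ε - ε^2) * (marg p U u * Wu u)
          = marg p U u * ((1 - ε - ε^2) * Wu u) := by ring
        _ ≤ marg p U u * WQ u := mul_le_mul_of_nonneg_left hc (hpU0 u)
  -- positivity of q-side variances
  have hl : 0 < 1 - ε - ε^2 := by
    have h1 : ε^2 ≤ ε * (1/2) := by
      rw [pow_two]
      exact mul_le_mul_of_nonneg_left hε12.le hε0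
    linarith
  have hVq_pos : 0 < cvar q U fX' := lt_of_lt_of_le (mul_pos hl hVp) hvarqF_lb
  have hWq_pos : 0 < cvar q U gY' := lt_of_lt_of_le (mul_pos hl hWp) hvarqG_lb
  have hguardq : 0 < cvar q U fX' * cvar q U gY' := mul_pos hVq_pos hWq_pos
  have h1ε : 0 < 1 + ε := by linarith
  have hε2ε : ε^2 ≤ ε := by
    have h1 : ε^2 ≤ ε * (1/2) := by
      rw [pow_two]
      exact mul_le_mul_of_nonneg_left hε12.le hε0
    linarith
  have hrc : 0 < r - (ε + ε^2) := by
    rw [htε] at hrt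
    linarith
  have hsVp : 0 < Real.sqrt (cvar p U fX) := Real.sqrt_pos.2 hVp
  have hsWp : 0 < Real.sqrt (cvar p U gY) := Real.sqrt_pos.2 hWp
  -- lower bound on the q-correlation
  have hccorrq : (r - (ε + ε^2)) / (1 + ε) ≤ ccorr q U fX' gY' := by
    unfold ccorr
    rw [if_pos hguardq]
    have hnum : (r - (ε + ε^2)) * (Real.sqrt (cvar p U fX) * Real.sqrt (cvar p U gY))
        ≤ ccov q U fX' gY' := by
      rw [hrfact] at hccovq_ge
      have hexp : (r - (ε + ε^2)) * (Real.sqrt (cvar p U fX) * Real.sqrt (cvar p U gY))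
          = r * (Real.sqrt (cvar p U fX) * Real.sqrt (cvar p U gY))
            - (ε + ε^2) * (Real.sqrt (cvar p U fX) * Real.sqrt (cvar p U gY)) := by ring
      linarith
    have hsf : Real.sqrt (cvar q U fX')
        ≤ Real.sqrt (1 + ε) * Real.sqrt (cvar p U fX) := by
      rw [← Real.sqrt_mul h1ε.le]
      exact Real.sqrt_le_sqrt hvarqF_ub
    have hsg : Real.sqrt (cvar q U gY')
        ≤ Real.sqrt (1 + ε) * Real.sqrt (cvar p U gY) := by
      rw [← Real.sqrt_mul h1ε.le]
      exact Real.sqrt_le_sqrt hvarqG_ub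
    have hD_pos : 0 < Real.sqrt (cvar q U fX') * Real.sqrt (cvar q U gY') :=
      mul_pos (Real.sqrt_pos.2 hVq_pos) (Real.sqrt_pos.2 hWq_pos)
    have hD_le : Real.sqrt (cvar q U fX') * Real.sqrt (cvar q U gY')
        ≤ (1 + ε) * (Real.sqrt (cvar p U fX) * Real.sqrt (cvar p U gY)) := by
      calc Real.sqrt (cvar q U fX') * Real.sqrt (cvar q U gY')
          ≤ (Real.sqrt (1 + ε) * Real.sqrt (cvar p U fX))
            * (Real.sqrt (1 + ε) * Real.sqrt (cvar p U gY)) :=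
            mul_le_mul hsf hsg (Real.sqrt_nonneg _) (by positivity)
        _ = (Real.sqrt (1 + ε) * Real.sqrt (1 + ε))
            * (Real.sqrt (cvar p U fX) * Real.sqrt (cvar p U gY)) := by ring
        _ = (1 + ε) * (Real.sqrt (cvar p U fX) * Real.sqrt (cvar p U gY)) := by
            rw [Real.mul_self_sqrt h1ε.le]
    have hNQ_pos : 0 < ccov q U fX' gY' :=
      lt_of_lt_of_le (mul_pos hrc (mul_pos hsVp hsWp)) hnum
    have hden_pos : 0 < (1 + ε) * (Real.sqrt (cvar p U fX) * Real.sqrt (cvar p U gY)) :=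
      mul_pos h1ε (mul_pos hsVp hsWp)
    calc (r - (ε + ε^2)) / (1 + ε)
        = ((r - (ε + ε^2)) * (Real.sqrt (cvar p U fX) * Real.sqrt (cvar p U gY)))
          / ((1 + ε) * (Real.sqrt (cvar p U fX) * Real.sqrt (cvar p U gY))) := by
          rw [mul_div_mul_right _ _ (mul_pos hsVp hsWp).ne']
      _ ≤ ccov q U fX' gY'
          / ((1 + ε) * (Real.sqrt (cvar p U fX) * Real.sqrt (cvar p U gY))) :=
          (div_le_div_iff_of_pos_right hden_pos).2 hnum
      _ ≤ ccov q U fX' gY'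
          / (Real.sqrt (cvar q U fX') * Real.sqrt (cvar q U gY')) :=
          div_le_div_of_nonneg_left hNQ_pos.le hD_pos hD_le
  -- comparison with the supremum
  have hb1 : ccorr q U fX' gY' ≤ ⨆ g0 : 𝒴 × 𝒰 → ℝ,
      ccorr q U fX' fun ω => g0 (Y ω, U ω) := by
    have hbdd : BddAbove (Set.range fun g0 : 𝒴 × 𝒰 → ℝ =>
        ccorr q U fX' fun ω => g0 (Y ω, U ω)) :=
      ⟨1, by rintro x ⟨g0, rfl⟩; exact ccorr_le_one hq0 U _ _⟩
    exact le_ciSup hbdd g'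
  have hb2 : (⨆ g0 : 𝒴 × 𝒰 → ℝ, ccorr q U fX' fun ω => g0 (Y ω, U ω))
      ≤ maxCorr q U X Y := by
    have hunfq : maxCorr q U X Y = ⨆ f0 : 𝒳 × 𝒰 → ℝ, ⨆ g0 : 𝒴 × 𝒰 → ℝ,
        ccorr q U (fun ω => f0 (X ω, U ω)) fun ω => g0 (Y ω, U ω) := rfl
    rw [hunfq]
    have hbdd : BddAbove (Set.range fun f0 : 𝒳 × 𝒰 → ℝ => ⨆ g0 : 𝒴 × 𝒰 → ℝ,
        ccorr q U (fun ω => f0 (X ω, U ω)) fun ω => g0 (Y ω, U ω)) := by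
      refine ⟨1, ?_⟩
      rintro x ⟨f0, rfl⟩
      exact ciSup_le fun g0 => ccorr_le_one hq0 U _ _
    exact le_ciSup hbdd f'
  have hMq_ge : (r - (ε + ε^2)) / (1 + ε) ≤ maxCorr q U X Y :=
    le_trans hccorrq (le_trans hb1 hb2)
  -- final arithmetic
  have hmul : r - (ε + ε^2) ≤ maxCorr q U X Y * (1 + ε) := (div_le_iff₀ h1ε).1 hMq_ge
  have hεM : 0 ≤ ε * maxCorr q U X Y := mul_nonneg hε0 hMq0
  have e1 : maxCorr q U X Y * (1 + t) = maxCorr q U X Y + 2 * (ε * maxCorr q U X Y) := by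
    rw [htε]; ring
  have e2 : maxCorr q U X Y * (1 + ε) = maxCorr q U X Y + ε * maxCorr q U X Y := by ring
  rw [htε]
  linarith







end GCI
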